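/- Let N ∈ ℕ, let g : {0,…,N} → ℝ be monotone increasing (g(k) ≤ g(k+1) for all k < N), and let p ∈ [0,1]. Then Σ_{k=0}^{N} (N choose k) · p^k · (1-p)^{N-k} · (k − N·p) · g(k) ≥ (g(⌈Np⌉) − g(⌊Np⌋)) · Σ_{k=⌈Np⌉}^{N} (N choose k) · p^k · (1-p)^{N-k} · (k − N·p), and in particular the left-hand side is nonnegative. -/
import Mathlib

lemma bern_eval_sum (N : ℕ) (p : ℝ) :
    ∑ k ∈ Finset.range (N + 1),
      (N.choose k : ℝ) * p ^ k * (1 - p) ^ (N - k) = 1 := by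
  have h := congrArg (Polynomial.eval p) (bernsteinPolynomial.sum ℝ N)
  simpa [bernsteinPolynomial, Polynomial.eval_finset_sum] using h

lemma bern_eval_mean (N : ℕ) (p : ℝ) :
    ∑ k ∈ Finset.range (N + 1),
      (k : ℝ) * ((N.choose k : ℝ) * p ^ k * (1 - p) ^ (N - k)) = (N : ℝ) * p := by
  have h := congrArg (Polynomial.eval p) (bernsteinPolynomial.sum_smul ℝ N)
  simpa [bernsteinPolynomial, Polynomial.eval_finset_sum, mul_assoc,
    nsmul_eq_mul] using h

/-- For monotone increasing `g : {0,…,N} → ℝ` and `p ∈ [0,1]`,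
`Σ_{k=0}^{N} C(N,k) p^k (1-p)^(N-k) (k - Np) g(k)
  ≥ (g(⌈Np⌉) - g(⌊Np⌋)) · Σ_{k=⌈Np⌉}^{N} C(N,k) p^k (1-p)^(N-k) (k - Np)`,
and in particular the left-hand side is nonnegative. -/
theorem stmt_6 (N : ℕ) (g : ℕ → ℝ) (hmono : ∀ k < N, g k ≤ g (k + 1))
    (p : ℝ) (hp : p ∈ Set.Icc (0 : ℝ) 1) :
    ((g ⌈(N : ℝ) * p⌉₊ - g ⌊(N : ℝ) * p⌋₊) *
        ∑ k ∈ Finset.Icc ⌈(N : ℝ) * p⌉₊ N,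
          (N.choose k : ℝ) * p ^ k * (1 - p) ^ (N - k) * ((k : ℝ) - N * p)) ≤
      (∑ k ∈ Finset.range (N + 1),
        (N.choose k : ℝ) * p ^ k * (1 - p) ^ (N - k) * ((k : ℝ) - N * p) * g k) ∧
    0 ≤ ∑ k ∈ Finset.range (N + 1),
        (N.choose k : ℝ) * p ^ k * (1 - p) ^ (N - k) * ((k : ℝ) - N * p) * g k := by
  obtain ⟨hp0, hp1⟩ := hp
  have hq0 : (0 : ℝ) ≤ (N : ℝ) * p := mul_nonneg (Nat.cast_nonneg N) hp0
  have hqN : (N : ℝ) * p ≤ (N : ℝ) := by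
    calc (N : ℝ) * p ≤ (N : ℝ) * 1 := by
          exact mul_le_mul_of_nonneg_left hp1 (Nat.cast_nonneg N)
      _ = (N : ℝ) := mul_one _
  set q : ℝ := (N : ℝ) * p with hqdef
  set m : ℕ := ⌊q⌋₊ with hmdef
  set M : ℕ := ⌈q⌉₊ with hMdef
  have hMN : M ≤ N := Nat.ceil_le.mpr (by exact_mod_cast hqN)
  have hmM : m ≤ M := Nat.floor_le_ceil q
  have hMm1 : M ≤ m + 1 := Nat.ceil_le_floor_add_one q
  -- monotonicity on [0, N]
  have hg : ∀ i j, i ≤ j → j ≤ N → g i ≤ g j := by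
    intro i j hij hjN
    induction j with
    | zero => simp_all
    | succ n ih =>
      rcases Nat.lt_or_ge i (n + 1) with h | h
      · exact (ih (Nat.lt_succ_iff.mp h) (Nat.le_of_succ_le hjN)).trans (hmono n hjN)
      · have : i = n + 1 := le_antisymm hij h
        subst this; exact le_refl _
  set w : ℕ → ℝ := fun k => (N.choose k : ℝ) * p ^ k * (1 - p) ^ (N - k) * ((k : ℝ) - q)
    with hwdef
  have hc : ∀ k, (0 : ℝ) ≤ (N.choose k : ℝ) * p ^ k * (1 - p) ^ (N - k) := fun k =>
    mul_nonneg (mul_nonneg (Nat.cast_nonneg _) (pow_nonneg hp0 _))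
      (pow_nonneg (by linarith) _)
  have hwpos : ∀ k, M ≤ k → 0 ≤ w k := by
    intro k hk
    have : q ≤ (k : ℝ) := Nat.ceil_le.mp hk
    exact mul_nonneg (hc k) (by linarith)
  have hwneg : ∀ k, k < M → w k ≤ 0 := by
    intro k hk
    have : (k : ℝ) < q := Nat.lt_ceil.mp hk
    exact mul_nonpos_of_nonneg_of_nonpos (hc k) (by linarith)
  -- the weights sum to zero
  have S0 : ∑ k ∈ Finset.range (N + 1), w k = 0 := by
    have h1 := bern_eval_sum N p
    have h2 := bern_eval_mean N p
    have h3 : ∑ k ∈ Finset.range (N + 1), w k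
        = (∑ k ∈ Finset.range (N + 1),
            (k : ℝ) * ((N.choose k : ℝ) * p ^ k * (1 - p) ^ (N - k)))
          - q * ∑ k ∈ Finset.range (N + 1),
            ((N.choose k : ℝ) * p ^ k * (1 - p) ^ (N - k)) := by
      rw [Finset.mul_sum, ← Finset.sum_sub_distrib]
      apply Finset.sum_congr rfl
      intro k _
      simp only [hwdef]
      ring
    rw [h3, h1, h2, ← hqdef]
    ring
  -- split the sum
  have hsplit : ∑ k ∈ Finset.range (N + 1), w k
      = (∑ k ∈ Finset.Ico 0 M, w k) + ∑ k ∈ Finset.Ico M (N + 1), w k := by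
    rw [Finset.range_eq_Ico, ← Finset.sum_Ico_consecutive _ (Nat.zero_le M)
      (by omega)]
  set B : ℝ := ∑ k ∈ Finset.Ico M (N + 1), w k with hBdef
  have hA : ∑ k ∈ Finset.Ico 0 M, w k = -B := by
    have := S0; rw [hsplit] at this; linarith
  have hBnn : 0 ≤ B := Finset.sum_nonneg fun k hk =>
    hwpos k (Finset.mem_Ico.mp hk).1
  have hgmM : g m ≤ g M := hg m M hmM hMN
  -- pointwise bound and summation
  have key : (g M - g m) * B ≤ ∑ k ∈ Finset.range (N + 1), w k * g k := by
    have hlb : ∑ k ∈ Finset.range (N + 1),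
        (if M ≤ k then w k * g M else w k * g m)
        ≤ ∑ k ∈ Finset.range (N + 1), w k * g k := by
      apply Finset.sum_le_sum
      intro k hk
      have hkN : k ≤ N := Nat.lt_succ_iff.mp (Finset.mem_range.mp hk)
      by_cases h : M ≤ k
      · rw [if_pos h]
        exact mul_le_mul_of_nonneg_left (hg M k h hkN) (hwpos k h)
      · rw [if_neg h]
        push_neg at h
        have hkm : k ≤ m := by omega
        exact mul_le_mul_of_nonpos_left (hg k m hkm (le_trans hmM hMN)) (hwneg k h)
    refine le_trans (le_of_eq ?_) hlb
    rw [Finset.range_eq_Ico, ← Finset.sum_Ico_consecutive _ (Nat.zero_le M)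
      (by omega : M ≤ N + 1)]
    have e1 : ∑ k ∈ Finset.Ico 0 M, (if M ≤ k then w k * g M else w k * g m)
        = (∑ k ∈ Finset.Ico 0 M, w k) * g m := by
      rw [Finset.sum_mul]
      apply Finset.sum_congr rfl
      intro k hk
      have : k < M := (Finset.mem_Ico.mp hk).2
      rw [if_neg (by omega)]
    have e2 : ∑ k ∈ Finset.Ico M (N + 1), (if M ≤ k then w k * g M else w k * g m)
        = B * g M := by
      rw [hBdef, Finset.sum_mul]
      apply Finset.sum_congr rfl
      intro k hk
      rw [if_pos (Finset.mem_Ico.mp hk).1]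
    rw [e1, e2, hA]
    ring
  have hfinal : ∑ k ∈ Finset.range (N + 1), w k * g k
      = ∑ k ∈ Finset.range (N + 1),
        (N.choose k : ℝ) * p ^ k * (1 - p) ^ (N - k) * ((k : ℝ) - N * p) * g k := by
    apply Finset.sum_congr rfl
    intro k _
    simp [hwdef, hqdef]
  have hB' : B = ∑ k ∈ Finset.Icc M N,
      (N.choose k : ℝ) * p ^ k * (1 - p) ^ (N - k) * ((k : ℝ) - N * p) := by
    rw [hBdef, Finset.Ico_add_one_right_eq_Icc]
  constructor
  · rw [← hfinal, ← hB']
    exact key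
  · rw [← hfinal]
    refine le_trans ?_ key
    exact mul_nonneg (by linarith) hBnn
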